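/- Let ψ : [0,∞) → [0,∞) be C^2 on (0, 2ℓ_0) ∪ (2ℓ_0, ∞) with ψ'' ≤ 0, ψ''' ≥ 0 and ψ⁽⁴⁾ ≤ 0 there, and ψ continuous, increasing, concave on [0,∞). Then for any κ > 0 and all r ≥ 0, ψ(r − r∧κ) + ψ(r + r∧κ) − 2ψ(r) ≤ 0; moreover if r + r∧κ ≤ 2ℓ_0, then ψ(r − r∧κ) + ψ(r + r∧κ) − 2ψ(r) ≤ ψ''(r) (r∧κ)². -/

import Mathlib

open Set

/-- Second-order Taylor estimate for the concave distance function `ψ` used in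
refined basic coupling: if `ψ` is increasing and concave on `[0,∞)`, `C²` with
`ψ'' ≤ 0`, `ψ''' ≥ 0`, `ψ⁽⁴⁾ ≤ 0` on `(0,2ℓ₀) ∪ (2ℓ₀,∞)`, then for every `κ > 0`
and `r ≥ 0`, `ψ(r − r∧κ) + ψ(r + r∧κ) − 2ψ(r) ≤ 0`, with the sharpening
`ψ(r − r∧κ) + ψ(r + r∧κ) − 2ψ(r) ≤ ψ''(r)(r∧κ)²` when `r + r∧κ ≤ 2ℓ₀`. -/
theorem stmt_13 (ℓ₀ : ℝ) (hℓ₀ : 0 < ℓ₀) (ψ : ℝ → ℝ)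
    (hcont : ContinuousOn ψ (Ici 0))
    (hmono : MonotoneOn ψ (Ici 0))
    (hconc : ConcaveOn ℝ (Ici 0) ψ)
    (hC4 : ContDiffOn ℝ 4 ψ (Ioo 0 (2 * ℓ₀) ∪ Ioi (2 * ℓ₀)))
    (h2 : ∀ r ∈ Ioo 0 (2 * ℓ₀) ∪ Ioi (2 * ℓ₀), iteratedDeriv 2 ψ r ≤ 0)
    (h3 : ∀ r ∈ Ioo 0 (2 * ℓ₀) ∪ Ioi (2 * ℓ₀), 0 ≤ iteratedDeriv 3 ψ r)
    (h4 : ∀ r ∈ Ioo 0 (2 * ℓ₀) ∪ Ioi (2 * ℓ₀), iteratedDeriv 4 ψ r ≤ 0)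
    (κ : ℝ) (hκ : 0 < κ) :
    (∀ r : ℝ, 0 ≤ r →
        ψ (r - min r κ) + ψ (r + min r κ) - 2 * ψ r ≤ 0) ∧
      ∀ r : ℝ, 0 ≤ r → r + min r κ ≤ 2 * ℓ₀ →
        ψ (r - min r κ) + ψ (r + min r κ) - 2 * ψ r ≤
          iteratedDeriv 2 ψ r * (min r κ) ^ 2 := by
  constructor
  · -- Part 1: concavity midpoint inequality
    intro r hr
    have hδ0 : 0 ≤ min r κ := le_min hr hκ.le
    have hδr : min r κ ≤ r := min_le_left _ _
    have ha : r - min r κ ∈ Ici (0:ℝ) := by simp only [mem_Ici]; linarith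
    have hb : r + min r κ ∈ Ici (0:ℝ) := by simp only [mem_Ici]; linarith
    have h := hconc.2 ha hb (by norm_num : (0:ℝ) ≤ 1/2) (by norm_num : (0:ℝ) ≤ 1/2)
      (by norm_num : (1:ℝ)/2 + 1/2 = 1)
    simp only [smul_eq_mul] at h
    have heq : (1/2 : ℝ) * (r - min r κ) + (1/2:ℝ) * (r + min r κ) = r := by ring
    rw [heq] at h
    linarith
  · -- Part 2
    intro r hr hrκ
    rcases eq_or_lt_of_le hr with hr0 | hr0
    · have h0 : min r κ = 0 := by rw [← hr0]; exact min_eq_left hκ.le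
      rw [h0]
      simp only [sub_zero, add_zero]
      rw [show ((0:ℝ)) ^ 2 = 0 by norm_num, mul_zero]
      linarith
    set δ := min r κ with hδdef
    have hδpos : 0 < δ := lt_min hr0 hκ
    have hδr : δ ≤ r := min_le_left _ _
    set U : Set ℝ := Ioo 0 (2 * ℓ₀) with hUdef
    have hU : IsOpen U := isOpen_Ioo
    have hUint : interior U = U := hU.interior_eq
    have hC4U : ContDiffOn ℝ 4 ψ U := hC4.mono subset_union_left
    have hC3 : ContDiffOn ℝ 3 (deriv ψ) U := by
      apply hC4U.deriv_of_isOpen hU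
      norm_num
    have hC2 : ContDiffOn ℝ 2 (deriv (deriv ψ)) U := by
      apply hC3.deriv_of_isOpen hU
      norm_num
    have hC1 : ContDiffOn ℝ 1 (deriv (deriv (deriv ψ))) U := by
      apply hC2.deriv_of_isOpen hU
      norm_num
    -- ψ'' is concave on U
    have hconc2 : ConcaveOn ℝ U (deriv (deriv ψ)) := by
      apply concaveOn_of_deriv2_nonpos (convex_Ioo _ _) hC2.continuousOn
      · rw [hUint]; exact hC2.differentiableOn (by norm_num)
      · rw [hUint]; exact hC1.differentiableOn (by norm_num)
      · rw [hUint]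
        intro x hx
        have key : deriv^[2] (deriv (deriv ψ)) x = iteratedDeriv 4 ψ x := by
          rw [iteratedDeriv_eq_iterate]
          show deriv^[2] (deriv^[2] ψ) x = deriv^[4] ψ x
          rw [← Function.iterate_add_apply]
        rw [key]
        exact h4 x (Or.inl hx)
    set c := deriv (deriv ψ) r with hcdef
    have hasD : ∀ x ∈ U, HasDerivAt ψ (deriv ψ x) x := by
      intro x hx
      exact ((hC4U.differentiableOn (by norm_num) x hx).differentiableAt
        (hU.mem_nhds hx)).hasDerivAt
    have hasD2 : ∀ x ∈ U, HasDerivAt (deriv ψ) (deriv (deriv ψ) x) x := by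
      intro x hx
      exact ((hC3.differentiableOn (by norm_num) x hx).differentiableAt
        (hU.mem_nhds hx)).hasDerivAt
    -- Claim A : the estimate on [0, δ)
    have claimA : ∀ s ∈ Ico (0:ℝ) δ,
        ψ (r - s) + ψ (r + s) - 2 * ψ r - c * s ^ 2 ≤ 0 := by
      intro s hs
      obtain ⟨hs0, hsδ⟩ := hs
      rcases eq_or_lt_of_le hs0 with hs0' | hs0'
      · rw [← hs0']
        simp only [sub_zero, add_zero]
        rw [show ((0:ℝ)) ^ 2 = 0 by norm_num]
        ring_nf
        try exact le_rfl
      have hsub : ∀ t ∈ Icc (0:ℝ) s, r - t ∈ U ∧ r + t ∈ U := by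
        intro t ht
        constructor
        · constructor <;> [linarith [ht.2]; linarith [ht.1]]
        · constructor <;> [linarith [ht.1]; linarith [ht.2]]
      have hrU : r ∈ U := (hsub 0 ⟨le_rfl, hs0⟩).1.imp (by simp) (by simp)
      -- midpoint inequality for ψ''
      have hmid : ∀ t ∈ Icc (0:ℝ) s,
          deriv (deriv ψ) (r + t) + deriv (deriv ψ) (r - t) - 2 * c ≤ 0 := by
        intro t ht
        obtain ⟨h1, h2'⟩ := hsub t ht
        have h := hconc2.2 h1 h2' (by norm_num : (0:ℝ) ≤ 1/2) (by norm_num : (0:ℝ) ≤ 1/2)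
          (by norm_num : (1:ℝ)/2 + 1/2 = 1)
        simp only [smul_eq_mul] at h
        have heq : (1/2 : ℝ) * (r - t) + (1/2:ℝ) * (r + t) = r := by ring
        rw [heq] at h
        rw [hcdef]; linarith
      set φ2 : ℝ → ℝ := fun t => deriv ψ (r + t) - deriv ψ (r - t) - 2 * c * t with hφ2
      have hmapsP : MapsTo (fun t : ℝ => r + t) (Icc 0 s) U := fun t ht => (hsub t ht).2
      have hmapsM : MapsTo (fun t : ℝ => r - t) (Icc 0 s) U := fun t ht => (hsub t ht).1
      have hDφ2 : ∀ t ∈ Icc (0:ℝ) s, HasDerivAt φ2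
          (deriv (deriv ψ) (r + t) + deriv (deriv ψ) (r - t) - 2 * c) t := by
        intro t ht
        obtain ⟨h1, h2'⟩ := hsub t ht
        have d1 : HasDerivAt (fun t : ℝ => deriv ψ (r + t)) (deriv (deriv ψ) (r + t) * 1) t :=
          (hasD2 _ h2').comp t ((hasDerivAt_id t).const_add r)
        have d2 : HasDerivAt (fun t : ℝ => deriv ψ (r - t)) (deriv (deriv ψ) (r - t) * (-1)) t :=
          (hasD2 _ h1).comp t ((hasDerivAt_id t).const_sub r)
        have d3 : HasDerivAt (fun t : ℝ => 2 * c * t) (2 * c) t := by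
          simpa using (hasDerivAt_id t).const_mul (2 * c)
        have := (d1.sub d2).sub d3
        refine this.congr_deriv ?_
        ring
      have hcontφ2 : ContinuousOn φ2 (Icc 0 s) := by
        apply ContinuousOn.sub
        apply ContinuousOn.sub
        · exact hC3.continuousOn.comp (continuous_const.add continuous_id).continuousOn hmapsP
        · exact hC3.continuousOn.comp (continuous_const.sub continuous_id).continuousOn hmapsM
        · exact (continuous_const.mul continuous_id).continuousOn
      have hintIcc : interior (Icc (0:ℝ) s) = Ioo 0 s := interior_Icc
      have hantiφ2 : AntitoneOn φ2 (Icc 0 s) := by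
        apply antitoneOn_of_deriv_nonpos (convex_Icc _ _) hcontφ2
        · rw [hintIcc]
          intro t ht
          exact (hDφ2 t (Ioo_subset_Icc_self ht)).differentiableAt.differentiableWithinAt
        · rw [hintIcc]
          intro t ht
          rw [(hDφ2 t (Ioo_subset_Icc_self ht)).deriv]
          exact hmid t (Ioo_subset_Icc_self ht)
      have hφ2le : ∀ t ∈ Icc (0:ℝ) s, φ2 t ≤ 0 := by
        intro t ht
        have h0 : φ2 0 = 0 := by simp [hφ2]
        have := hantiφ2 (left_mem_Icc.2 hs0) ht ht.1
        linarith
      set φ1 : ℝ → ℝ := fun t => ψ (r - t) + ψ (r + t) - 2 * ψ r - c * t ^ 2 with hφ1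
      have hDφ1 : ∀ t ∈ Icc (0:ℝ) s, HasDerivAt φ1 (φ2 t) t := by
        intro t ht
        obtain ⟨h1, h2'⟩ := hsub t ht
        have d1 : HasDerivAt (fun t : ℝ => ψ (r + t)) (deriv ψ (r + t) * 1) t :=
          (hasD _ h2').comp t ((hasDerivAt_id t).const_add r)
        have d2 : HasDerivAt (fun t : ℝ => ψ (r - t)) (deriv ψ (r - t) * (-1)) t :=
          (hasD _ h1).comp t ((hasDerivAt_id t).const_sub r)
        have d3 : HasDerivAt (fun t : ℝ => c * t ^ 2) (c * (2 * t)) t := by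
          simpa using ((hasDerivAt_pow 2 t)).const_mul c
        have := ((d2.add d1).sub_const (2 * ψ r)).sub d3
        refine this.congr_deriv ?_
        simp only [hφ2]
        ring
      have hcontφ1 : ContinuousOn φ1 (Icc 0 s) := by
        apply ContinuousOn.sub
        apply ContinuousOn.sub
        apply ContinuousOn.add
        · exact hC4U.continuousOn.comp (continuous_const.sub continuous_id).continuousOn hmapsM
        · exact hC4U.continuousOn.comp (continuous_const.add continuous_id).continuousOn hmapsP
        · exact continuousOn_const
        · exact (continuous_const.mul (continuous_pow 2)).continuousOn
      have hantiφ1 : AntitoneOn φ1 (Icc 0 s) := by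
        apply antitoneOn_of_deriv_nonpos (convex_Icc _ _) hcontφ1
        · rw [hintIcc]
          intro t ht
          exact (hDφ1 t (Ioo_subset_Icc_self ht)).differentiableAt.differentiableWithinAt
        · rw [hintIcc]
          intro t ht
          rw [(hDφ1 t (Ioo_subset_Icc_self ht)).deriv]
          exact hφ2le t (Ioo_subset_Icc_self ht)
      have h0 : φ1 0 = 0 := by
        simp only [hφ1]
        norm_num
        try ring
      have h1 := hantiφ1 (left_mem_Icc.2 hs0) (right_mem_Icc.2 hs0) hs0
      rw [h0] at h1
      exact h1
    -- pass to the limit s → δ⁻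
    set F : ℝ → ℝ := fun t => ψ (r - t) + ψ (r + t) - 2 * ψ r - c * t ^ 2 with hF
    have hmapsM' : MapsTo (fun t : ℝ => r - t) (Icc 0 δ) (Ici (0:ℝ)) := by
      intro t ht
      simp only [mem_Ici]
      linarith [ht.2]
    have hmapsP' : MapsTo (fun t : ℝ => r + t) (Icc 0 δ) (Ici (0:ℝ)) := by
      intro t ht
      simp only [mem_Ici]
      linarith [ht.1]
    have hcontF : ContinuousOn F (Icc 0 δ) := by
      apply ContinuousOn.sub
      apply ContinuousOn.sub
      apply ContinuousOn.add
      · exact hcont.comp (continuous_const.sub continuous_id).continuousOn hmapsM'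
      · exact hcont.comp (continuous_const.add continuous_id).continuousOn hmapsP'
      · exact continuousOn_const
      · exact (continuous_const.mul (continuous_pow 2)).continuousOn
    have htend : Filter.Tendsto F (nhdsWithin δ (Ico 0 δ)) (nhds (F δ)) :=
      ((hcontF δ (right_mem_Icc.2 (le_of_lt hδpos))).mono_left
        (nhdsWithin_mono _ Ico_subset_Icc_self))
    haveI hne : (nhdsWithin δ (Ico (0:ℝ) δ)).NeBot := by
      rw [← mem_closure_iff_nhdsWithin_neBot, closure_Ico hδpos.ne]
      exact right_mem_Icc.2 hδpos.le
    have hFδ : F δ ≤ 0 :=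
      le_of_tendsto htend (Filter.eventually_of_mem self_mem_nhdsWithin claimA)
    have hc2 : iteratedDeriv 2 ψ r = c := by
      rw [hcdef, iteratedDeriv_succ, iteratedDeriv_one]
    rw [hc2]
    simp only [hF] at hFδ
    linarith
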